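/- Fix an integer n ≥ 1. Let P and Q be coprime real polynomials of degree exactly 2n that are strictly positive at every point of ℝ, and let θ : ℝ → ℝ be Lebesgue-measurable with θ(x) > 0 for all x and ∫ (1+|x|^{2n}) θ(x) dx < ∞. If u, v ∈ V_{2n−1} satisfy ∫_ℝ x^k ( u(x)/P(x) − v(x)/Q(x) ) θ(x) dx = 0 for every k = 0, 1, …, 2n and ∫_ℝ x^k ( u(x)Q(x) − v(x)P(x) ) θ(x)/Q(x)² dx = 0 for every k = 0, 1, …, 2n, then u = 0 and v = 0. -/

import Mathlib

open MeasureTheory Polynomial Real Filter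

lemma aux_bdd {f : ℝ → ℝ} (hf : Continuous f) {a b : ℝ}
    (ha : Tendsto f atTop (nhds a)) (hb : Tendsto f atBot (nhds b)) :
    ∃ C : ℝ, ∀ x, |f x| ≤ C := by
  have h1 : ∀ᶠ x in atTop, |f x| ≤ |a| + 1 :=
    (ha.abs).eventually_le_const (lt_add_one _)
  have h2 : ∀ᶠ x in atBot, |f x| ≤ |b| + 1 :=
    (hb.abs).eventually_le_const (lt_add_one _)
  obtain ⟨X1, hX1⟩ := eventually_atTop.1 h1
  obtain ⟨X2, hX2⟩ := eventually_atBot.1 h2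
  obtain ⟨M, hM⟩ :=
    (isCompact_Icc (a := X2) (b := X1)).exists_bound_of_continuousOn hf.continuousOn
  refine ⟨max (max (|a| + 1) (|b| + 1)) M, fun x => ?_⟩
  rcases le_total x X2 with h | h
  · exact le_trans (hX2 x h) (le_trans (le_max_right _ _) (le_max_left _ _))
  rcases le_total X1 x with h' | h'
  · exact le_trans (hX1 x h') (le_trans (le_max_left _ _) (le_max_left _ _))
  · exact le_trans (le_of_eq (Real.norm_eq_abs _).symm)
      (le_trans (hM x ⟨h, h'⟩) (le_max_right _ _))

lemma aux_tendsto_top (N D : Polynomial ℝ) (hdeg : N.degree ≤ D.degree) :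
    ∃ L : ℝ, Tendsto (fun x => N.eval x / D.eval x) atTop (nhds L) := by
  rcases lt_or_eq_of_le hdeg with h | h
  · exact ⟨0, Polynomial.div_tendsto_zero_of_degree_lt N D h⟩
  · exact ⟨_, Polynomial.div_tendsto_leadingCoeff_div_of_degree_eq N D h⟩

lemma aux_poly_div_bound (N D : Polynomial ℝ) (hD : ∀ x, 0 < D.eval x)
    (hdeg : N.degree ≤ D.degree) :
    ∃ C : ℝ, ∀ x, |N.eval x| ≤ C * D.eval x := by
  by_cases hN0 : N = 0
  · exact ⟨1, fun x => by simp [hN0, (hD x).le]⟩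
  have hD0 : D ≠ 0 := fun h => by simpa [h] using hD 0
  set N' : Polynomial ℝ := N.comp (-X) with hN'
  set D' : Polynomial ℝ := D.comp (-X) with hD'
  have hevalN : ∀ x : ℝ, N'.eval x = N.eval (-x) := fun x => by
    simp [hN', Polynomial.eval_comp]
  have hevalD : ∀ x : ℝ, D'.eval x = D.eval (-x) := fun x => by
    simp [hD', Polynomial.eval_comp]
  have hN'0 : N' ≠ 0 := by
    intro h
    apply hN0
    apply Polynomial.funext
    intro r
    have := hevalN (-r)
    rw [h] at this
    simpa using this.symm
  have hD'0 : D' ≠ 0 := by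
    intro h
    have h0 := hevalD 0
    rw [h] at h0
    simp at h0
    exact (hD 0).ne h0
  have hndeg : N'.natDegree ≤ D'.natDegree := by
    have h1 : N'.natDegree = N.natDegree := by
      rw [hN', Polynomial.natDegree_comp]
      simp [Polynomial.natDegree_neg]
    have h2 : D'.natDegree = D.natDegree := by
      rw [hD', Polynomial.natDegree_comp]
      simp [Polynomial.natDegree_neg]
    rw [h1, h2]
    exact Polynomial.natDegree_le_natDegree hdeg
  have hdeg' : N'.degree ≤ D'.degree := by
    rw [Polynomial.degree_eq_natDegree hN'0, Polynomial.degree_eq_natDegree hD'0]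
    exact_mod_cast hndeg
  obtain ⟨LA, hLA⟩ := aux_tendsto_top N D hdeg
  obtain ⟨LB, hLB'⟩ := aux_tendsto_top N' D' hdeg'
  have hLB : Tendsto (fun x => N.eval x / D.eval x) atBot (nhds LB) := by
    have hcomp : Tendsto ((fun x => N'.eval x / D'.eval x) ∘ Neg.neg) atBot (nhds LB) :=
      hLB'.comp tendsto_neg_atBot_atTop
    have : ((fun x => N'.eval x / D'.eval x) ∘ Neg.neg) = fun x => N.eval x / D.eval x := by
      funext x
      simp [Function.comp, hevalN, hevalD]
    rwa [this] at hcomp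
  have hcont : Continuous fun x => N.eval x / D.eval x :=
    (Polynomial.continuous N).div (Polynomial.continuous D) fun x => (hD x).ne'
  obtain ⟨C, hC⟩ := aux_bdd hcont hLA hLB
  refine ⟨C, fun x => ?_⟩
  have := hC x
  rw [abs_div, abs_of_pos (hD x)] at this
  exact (div_le_iff₀ (hD x)).1 this

lemma aux_integrable (n : ℕ) (hn : 1 ≤ n) (θ : ℝ → ℝ) (hθmeas : Measurable θ)
    (hθpos : ∀ x, 0 < θ x)
    (hθint : Integrable (fun x : ℝ => (1 + |x| ^ (2 * n)) * θ x))
    (W D : Polynomial ℝ) (hD : ∀ x, 0 < D.eval x)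
    (hdeg : W.natDegree ≤ D.natDegree + 2 * n) :
    Integrable (fun x : ℝ => W.eval x / D.eval x * θ x) := by
  set E : Polynomial ℝ := X ^ (2 * n) + C 1 with hE
  have hEeval : ∀ x : ℝ, E.eval x = 1 + |x| ^ (2 * n) := by
    intro x
    have : |x| ^ (2 * n) = x ^ (2 * n) := by
      rw [pow_abs, abs_of_nonneg (even_two_mul n |>.pow_nonneg x)]
    simp [hE, this]
    ring
  have hEpos : ∀ x : ℝ, 0 < E.eval x := fun x => by
    rw [hEeval x]; positivity
  have hDE : ∀ x : ℝ, 0 < (D * E).eval x := fun x => by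
    rw [Polynomial.eval_mul]; exact mul_pos (hD x) (hEpos x)
  have hD0 : D ≠ 0 := fun h => by simpa [h] using hD 0
  have hE0 : E ≠ 0 := fun h => by simpa [h] using (hEpos 0).ne'
  have hdeg' : W.degree ≤ (D * E).degree := by
    calc W.degree ≤ (W.natDegree : WithBot ℕ) := Polynomial.degree_le_natDegree
    _ ≤ ((D.natDegree + 2 * n : ℕ) : WithBot ℕ) := by exact_mod_cast hdeg
    _ = (D * E).degree := by
        rw [Polynomial.degree_eq_natDegree (mul_ne_zero hD0 hE0),
          Polynomial.natDegree_mul hD0 hE0, hE, Polynomial.natDegree_X_pow_add_C]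
  obtain ⟨C₀, hC₀⟩ := aux_poly_div_bound W (D * E) hDE hdeg'
  have hmeas : AEStronglyMeasurable (fun x : ℝ => W.eval x / D.eval x * θ x) volume := by
    have : Measurable fun x : ℝ => W.eval x / D.eval x * θ x :=
      (((Polynomial.continuous W).div (Polynomial.continuous D)
          fun x => (hD x).ne').measurable).mul hθmeas
    exact this.aestronglyMeasurable
  refine Integrable.mono' (hθint.const_mul C₀) hmeas ?_
  refine Filter.Eventually.of_forall fun x => ?_
  have h1 : |W.eval x| ≤ C₀ * (D.eval x * E.eval x) := by
    have := hC₀ x; rwa [Polynomial.eval_mul] at this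
  have h2 : |W.eval x / D.eval x| ≤ C₀ * E.eval x := by
    rw [abs_div, abs_of_pos (hD x), div_le_iff₀ (hD x)]
    calc |W.eval x| ≤ C₀ * (D.eval x * E.eval x) := h1
    _ = C₀ * E.eval x * D.eval x := by ring
  calc ‖W.eval x / D.eval x * θ x‖ = |W.eval x / D.eval x| * θ x := by
        rw [Real.norm_eq_abs, abs_mul, abs_of_pos (hθpos x)]
  _ ≤ C₀ * E.eval x * θ x := by
        exact mul_le_mul_of_nonneg_right h2 (hθpos x).le
  _ = C₀ * ((1 + |x| ^ (2 * n)) * θ x) := by rw [hEeval x]; ring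

/-- Kernel triviality: at a coprime positive pair `(P,Q)` of degree-`2n` polynomials, the
only direction `(u,v) ∈ V_{2n−1} × V_{2n−1}` annihilated by the Jacobians of both the
generalized logarithmic moment map and the power moment map is `(0,0)`. -/
theorem jacobian_kernel_trivial_of_coprime
    (n : ℕ) (hn : 1 ≤ n)
    (P Q : Polynomial ℝ) (hcop : IsCoprime P Q)
    (hPdeg : P.natDegree = 2 * n) (hQdeg : Q.natDegree = 2 * n)
    (hPpos : ∀ x : ℝ, 0 < P.eval x) (hQpos : ∀ x : ℝ, 0 < Q.eval x)
    (θ : ℝ → ℝ) (hθmeas : Measurable θ) (hθpos : ∀ x, 0 < θ x)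
    (hθint : Integrable (fun x : ℝ => (1 + |x| ^ (2 * n)) * θ x))
    (u v : Polynomial ℝ)
    (hu : u ∈ Polynomial.degreeLT ℝ (2 * n)) (hv : v ∈ Polynomial.degreeLT ℝ (2 * n))
    (h1 : ∀ k ≤ 2 * n,
      ∫ x : ℝ, x ^ k * (u.eval x / P.eval x - v.eval x / Q.eval x) * θ x = 0)
    (h2 : ∀ k ≤ 2 * n,
      ∫ x : ℝ, x ^ k * (u.eval x * Q.eval x - v.eval x * P.eval x) * θ x
        / (Q.eval x) ^ 2 = 0) :
    u = 0 ∧ v = 0 := by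
  have hP0 : P ≠ 0 := fun h => by simpa [h] using (hPpos 0).ne'
  have hQ0 : Q ≠ 0 := fun h => by simpa [h] using (hQpos 0).ne'
  set R : Polynomial ℝ := u * Q - v * P with hRdef
  -- degree bounds
  have hund : u.natDegree ≤ 2 * n :=
    Polynomial.natDegree_le_iff_degree_le.2 (le_of_lt (Polynomial.mem_degreeLT.1 hu))
  have hvnd : v.natDegree ≤ 2 * n :=
    Polynomial.natDegree_le_iff_degree_le.2 (le_of_lt (Polynomial.mem_degreeLT.1 hv))
  have hRnd : R.natDegree ≤ 4 * n := by
    refine le_trans (Polynomial.natDegree_sub_le _ _) ?_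
    refine max_le ?_ ?_
    · exact le_trans (Polynomial.natDegree_mul_le) (by omega)
    · exact le_trans (Polynomial.natDegree_mul_le) (by omega)
  have hPQnd : (P * Q).natDegree = 4 * n := by
    rw [Polynomial.natDegree_mul hP0 hQ0]; omega
  have hQsqnd : (Q ^ 2).natDegree = 4 * n := by
    rw [Polynomial.natDegree_pow]; omega
  have hPQpos : ∀ x : ℝ, 0 < (P * Q).eval x := fun x => by
    rw [Polynomial.eval_mul]; exact mul_pos (hPpos x) (hQpos x)
  have hQsqpos : ∀ x : ℝ, 0 < (Q ^ 2).eval x := fun x => by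
    rw [Polynomial.eval_pow]; exact pow_pos (hQpos x) 2
  -- reformulated moment conditions
  have I1 : ∀ k ≤ 2 * n,
      ∫ x : ℝ, (X ^ k * R : Polynomial ℝ).eval x / (P * Q).eval x * θ x = 0 := by
    intro k hk
    refine Eq.trans (integral_congr_ae (Filter.Eventually.of_forall fun x => ?_)) (h1 k hk)
    have hPx := (hPpos x).ne'
    have hQx := (hQpos x).ne'
    simp only [hRdef, Polynomial.eval_mul, Polynomial.eval_pow, Polynomial.eval_X,
      Polynomial.eval_sub]
    rw [div_sub_div _ _ hPx hQx]
    ring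
  have I2 : ∀ k ≤ 2 * n,
      ∫ x : ℝ, (X ^ k * R : Polynomial ℝ).eval x / (Q ^ 2).eval x * θ x = 0 := by
    intro k hk
    refine Eq.trans (integral_congr_ae (Filter.Eventually.of_forall fun x => ?_)) (h2 k hk)
    simp only [hRdef, Polynomial.eval_mul, Polynomial.eval_pow, Polynomial.eval_X,
      Polynomial.eval_sub]
    ring
  -- integrability of building blocks
  have hintPQ : ∀ S : Polynomial ℝ, S.natDegree ≤ 2 * n →
      Integrable (fun x : ℝ => (S * R : Polynomial ℝ).eval x / (P * Q).eval x * θ x) := by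
    intro S hS
    refine aux_integrable n hn θ hθmeas hθpos hθint _ _ hPQpos ?_
    refine le_trans Polynomial.natDegree_mul_le ?_
    omega
  have hintQsq : ∀ S : Polynomial ℝ, S.natDegree ≤ 2 * n →
      Integrable (fun x : ℝ => (S * R : Polynomial ℝ).eval x / (Q ^ 2).eval x * θ x) := by
    intro S hS
    refine aux_integrable n hn θ hθmeas hθpos hθint _ _ hQsqpos ?_
    refine le_trans Polynomial.natDegree_mul_le ?_
    omega
  -- extension to arbitrary numerators of degree ≤ 2n
  have key : ∀ (D : Polynomial ℝ), (∀ x, 0 < D.eval x) → D.natDegree = 4 * n →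
      (∀ k ≤ 2 * n, ∫ x : ℝ, (X ^ k * R : Polynomial ℝ).eval x / D.eval x * θ x = 0) →
      ∀ S : Polynomial ℝ, S.natDegree ≤ 2 * n →
      ∫ x : ℝ, (S * R : Polynomial ℝ).eval x / D.eval x * θ x = 0 := by
    intro D hDpos hDnd hI S hS
    have hintk : ∀ k, k ≤ 2 * n →
        Integrable (fun x : ℝ => (X ^ k * R : Polynomial ℝ).eval x / D.eval x * θ x) := by
      intro k hk
      refine aux_integrable n hn θ hθmeas hθpos hθint _ _ hDpos ?_
      refine le_trans Polynomial.natDegree_mul_le ?_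
      have hxk : ((X : Polynomial ℝ) ^ k).natDegree = k := Polynomial.natDegree_X_pow k
      omega
    have heq : (fun x : ℝ => (S * R : Polynomial ℝ).eval x / D.eval x * θ x)
        = fun x : ℝ => ∑ k ∈ Finset.range (2 * n + 1),
            S.coeff k * ((X ^ k * R : Polynomial ℝ).eval x / D.eval x * θ x) := by
      funext x
      rw [Polynomial.eval_mul, Polynomial.eval_eq_sum_range' (Nat.lt_succ_of_le hS) x]
      rw [Finset.sum_mul, Finset.sum_div, Finset.sum_mul]
      refine Finset.sum_congr rfl fun k _ => ?_
      simp only [Polynomial.eval_mul, Polynomial.eval_pow, Polynomial.eval_X]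
      ring
    rw [heq, integral_finset_sum]
    · refine Finset.sum_eq_zero fun k hk => ?_
      rw [integral_const_mul, hI k (Nat.lt_succ_iff.1 (Finset.mem_range.1 hk)), mul_zero]
    · intro k hk
      exact (hintk k (Nat.lt_succ_iff.1 (Finset.mem_range.1 hk))).const_mul _
  -- R = 0
  have hR0 : R = 0 := by
    by_contra hR0
    -- Bezout-type representation R = S₂ * P + S₁ * Q with deg ≤ 2n
    obtain ⟨a, b, hab⟩ := hcop
    have hc : Q.leadingCoeff ≠ 0 := Polynomial.leadingCoeff_ne_zero.2 hQ0
    set Qm : Polynomial ℝ := Q * C Q.leadingCoeff⁻¹ with hQm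
    have hQmMonic : Qm.Monic := Polynomial.monic_mul_leadingCoeff_inv hQ0
    set S₂ : Polynomial ℝ := (R * a) %ₘ Qm with hS₂
    set k₀ : Polynomial ℝ := (R * a) /ₘ Qm with hk₀
    have hdiv : S₂ + Qm * k₀ = R * a := Polynomial.modByMonic_add_div (R * a) Qm
    set S₁ : Polynomial ℝ := k₀ * C Q.leadingCoeff⁻¹ * P + R * b with hS₁def
    have hRid : R = S₂ * P + S₁ * Q := by
      calc R = R * (a * P + b * Q) := by rw [hab, mul_one]
      _ = (R * a) * P + (R * b) * Q := by ring
      _ = (S₂ + Qm * k₀) * P + (R * b) * Q := by rw [hdiv]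
      _ = S₂ * P + S₁ * Q := by rw [hS₁def, hQm]; ring
    have hS₂nd : S₂.natDegree ≤ 2 * n := by
      have hlt : S₂.degree < Qm.degree := Polynomial.degree_modByMonic_lt (R * a) hQmMonic
      have hQmdeg : Qm.degree = ((2 * n : ℕ) : WithBot ℕ) := by
        rw [hQm, Polynomial.degree_mul, Polynomial.degree_C (inv_ne_zero hc),
          Polynomial.degree_eq_natDegree hQ0, hQdeg, add_zero]
      rw [hQmdeg] at hlt
      exact Polynomial.natDegree_le_iff_degree_le.2 (le_of_lt hlt)
    have hS₁nd : S₁.natDegree ≤ 2 * n := by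
      by_cases hS₁0 : S₁ = 0
      · simp [hS₁0]
      have heq : S₁ * Q = R - S₂ * P := by rw [hRid]; ring
      have h4 : (S₁ * Q).natDegree ≤ 4 * n := by
        rw [heq]
        refine le_trans (Polynomial.natDegree_sub_le _ _) (max_le hRnd ?_)
        exact le_trans Polynomial.natDegree_mul_le (by omega)
      rw [Polynomial.natDegree_mul hS₁0 hQ0, hQdeg] at h4
      omega
    -- combine
    have hzero : ∫ x : ℝ, (R * R : Polynomial ℝ).eval x / (P * Q ^ 2).eval x * θ x = 0 := by
      have hsplit : (fun x : ℝ => (R * R : Polynomial ℝ).eval x / (P * Q ^ 2).eval x * θ x)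
          = fun x : ℝ => (S₂ * R : Polynomial ℝ).eval x / (Q ^ 2).eval x * θ x
              + (S₁ * R : Polynomial ℝ).eval x / (P * Q).eval x * θ x := by
        funext x
        have hPx := (hPpos x).ne'
        have hQx := (hQpos x).ne'
        have hre : R.eval x = S₂.eval x * P.eval x + S₁.eval x * Q.eval x := by
          conv_lhs => rw [hRid]
          simp [Polynomial.eval_add, Polynomial.eval_mul]
        simp only [Polynomial.eval_mul, Polynomial.eval_pow]
        conv_lhs => rw [show R.eval x * R.eval x
          = R.eval x * (S₂.eval x * P.eval x + S₁.eval x * Q.eval x) from by rw [← hre]]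
        field_simp
      rw [hsplit, integral_add (hintQsq S₂ hS₂nd) (hintPQ S₁ hS₁nd),
        key (Q ^ 2) hQsqpos hQsqnd I2 S₂ hS₂nd, key (P * Q) hPQpos hPQnd I1 S₁ hS₁nd,
        add_zero]
    -- nonnegativity forces R ≡ 0 a.e.
    have hPQQpos : ∀ x : ℝ, 0 < (P * Q ^ 2).eval x := fun x => by
      rw [Polynomial.eval_mul, Polynomial.eval_pow]
      exact mul_pos (hPpos x) (pow_pos (hQpos x) 2)
    have hPQQnd : (P * Q ^ 2).natDegree = 6 * n := by
      rw [Polynomial.natDegree_mul hP0 (pow_ne_zero 2 hQ0), Polynomial.natDegree_pow]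
      omega
    have hfint : Integrable (fun x : ℝ => (R * R : Polynomial ℝ).eval x / (P * Q ^ 2).eval x * θ x) := by
      refine aux_integrable n hn θ hθmeas hθpos hθint _ _ hPQQpos ?_
      refine le_trans Polynomial.natDegree_mul_le ?_
      omega
    have hfnn : 0 ≤ fun x : ℝ => (R * R : Polynomial ℝ).eval x / (P * Q ^ 2).eval x * θ x := by
      intro x
      simp only [Pi.zero_apply]
      refine mul_nonneg (div_nonneg ?_ (hPQQpos x).le) (hθpos x).le
      rw [Polynomial.eval_mul]
      exact mul_self_nonneg _
    have hae := (integral_eq_zero_iff_of_nonneg hfnn hfint).1 hzero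
    have haeroot : ∀ᵐ x : ℝ, x ∈ {y : ℝ | R.IsRoot y} := by
      filter_upwards [hae] with x hx
      by_contra hroot
      have hRx : R.eval x ≠ 0 := hroot
      have hpos : 0 < (R * R : Polynomial ℝ).eval x / (P * Q ^ 2).eval x * θ x := by
        refine mul_pos (div_pos ?_ (hPQQpos x)) (hθpos x)
        rw [Polynomial.eval_mul]
        exact mul_self_pos.2 hRx
      exact hpos.ne' hx
    have hfin : ({y : ℝ | R.IsRoot y}).Finite := Polynomial.finite_setOf_isRoot hR0
    have hnull : volume ({y : ℝ | R.IsRoot y}ᶜ) = 0 := by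
      rw [← compl_compl {y : ℝ | R.IsRoot y}] at haeroot
      rw [Set.compl_setOf]
      simpa [ae_iff] using haeroot
    have : volume (Set.univ : Set ℝ) ≤ volume {y : ℝ | R.IsRoot y} + volume ({y : ℝ | R.IsRoot y}ᶜ) := by
      rw [← Set.union_compl_self {y : ℝ | R.IsRoot y}]
      exact measure_union_le _ _
    rw [Real.volume_univ, hnull, hfin.measure_zero, add_zero] at this
    exact (by simp : ¬ ((⊤ : ENNReal) ≤ 0)) this
  -- conclude
  have huv : u * Q = v * P := sub_eq_zero.1 (by rw [← hRdef]; exact hR0)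
  have hu0 : u = 0 := by
    by_contra hu0
    have hdvd : P ∣ u := hcop.dvd_of_dvd_mul_right ⟨v, by rw [huv]; ring⟩
    have hle : P.degree ≤ u.degree := Polynomial.degree_le_of_dvd hdvd hu0
    have hlt : u.degree < P.degree := by
      rw [Polynomial.degree_eq_natDegree hP0, hPdeg]
      exact_mod_cast Polynomial.mem_degreeLT.1 hu
    exact absurd hle (not_le.2 hlt)
  refine ⟨hu0, ?_⟩
  have hvP : v * P = 0 := by rw [← huv, hu0, zero_mul]
  rcases mul_eq_zero.1 hvP with h | h
  · exact h
  · exact absurd h hP0
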